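/- Suppose v₁, v₂, v₃, v₄ is an orthogonal basis of V with H(v_i, v_i) = a_i ∈ F^×, and d is normalized by d(v₁∧v₂∧v₃∧v₄) = −1. Then L(v₁∧v₂) = −a₁a₂·(v₃∧v₄), L(v₁∧v₃) = a₁a₃·(v₂∧v₄), L(v₁∧v₄) = −a₁a₄·(v₂∧v₃), L(v₂∧v₃) = −a₂a₃·(v₁∧v₄), L(v₂∧v₄) = a₂a₄·(v₁∧v₃), and L(v₃∧v₄) = −a₃a₄·(v₁∧v₂); in particular L ∘ L = a₁a₂a₃a₄ · id. -/

import Mathlib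

/-- The canonical generator `v₁ ∧ ⋯ ∧ vₙ` of the `n`-th exterior power, as an element of the
submodule `⋀[E]^n V` of the exterior algebra. -/
noncomputable def wedgeι (E : Type*) [CommRing E] {V : Type*} [AddCommGroup V] [Module E V]
    (n : ℕ) (v : Fin n → V) : ⋀[E]^n V :=
  ⟨ExteriorAlgebra.ιMulti E n v, ExteriorAlgebra.ιMulti_range E n (Set.mem_range_self v)⟩

/-- The wedge (exterior) product `⋀²V × ⋀²V → ⋀⁴V`. -/
noncomputable def wedgeMul (E : Type*) [CommRing E] {V : Type*} [AddCommGroup V] [Module E V]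
    (x y : ⋀[E]^2 V) : ⋀[E]^4 V :=
  ⟨(x : ExteriorAlgebra E V) * (y : ExteriorAlgebra E V), by
    have h := Submodule.mul_mem_mul x.2 y.2
    have e : (⋀[E]^2 V) * (⋀[E]^2 V) = ⋀[E]^4 V := by
      show LinearMap.range (ExteriorAlgebra.ι E (M := V)) ^ 2 *
          LinearMap.range (ExteriorAlgebra.ι E (M := V)) ^ 2
        = LinearMap.range (ExteriorAlgebra.ι E (M := V)) ^ 4
      rw [← pow_add]
    exact e ▸ h⟩

/-- `h` is a form on `⋀^r V`, additive in each variable, `ρ`-sesquilinear, conjugate-symmetric,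
whose value on decomposable wedges is the determinant `det (H (v i) (w j))`. -/
def IsDetForm {E : Type*} [Field E] (ρ : E →+* E)
    {V : Type*} [AddCommGroup V] [Module E V] (H : V → V → E) (r : ℕ)
    (h : (⋀[E]^r V) → (⋀[E]^r V) → E) : Prop :=
  (∀ x y z, h (x + y) z = h x z + h y z) ∧
  (∀ x y z, h x (y + z) = h x y + h x z) ∧
  (∀ (a b : E) (x y : ⋀[E]^r V), h (a • x) (b • y) = ρ a * h x y * b) ∧
  (∀ x y, h x y = ρ (h y x)) ∧
  (∀ v w : Fin r → V,
    h (wedgeι E r v) (wedgeι E r w) = (Matrix.of fun i j => H (v i) (w j)).det)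


namespace LProof


open ExteriorAlgebra

variable {E : Type*} [CommRing E] {V : Type*} [AddCommGroup V] [Module E V]

lemma wedgeι_two_coe (a b : V) :
    (wedgeι E 2 ![a, b] : ExteriorAlgebra E V) = ι E a * ι E b := by
  show ιMulti E 2 ![a, b] = _
  rw [ιMulti_apply]; simp

lemma wedgeι_four_coe (w : Fin 4 → V) :
    (wedgeι E 4 w : ExteriorAlgebra E V)
      = ι E (w 0) * (ι E (w 1) * (ι E (w 2) * ι E (w 3))) := by
  show ιMulti E 4 w = _
  rw [ιMulti_apply]; simp [mul_assoc]

lemma wedgeMul_coe (x y : ⋀[E]^2 V) :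
    (wedgeMul E x y : ExteriorAlgebra E V) = (x : ExteriorAlgebra E V) * y := rfl

lemma wedgeMul_add_left (x y z : ⋀[E]^2 V) :
    wedgeMul E (x + y) z = wedgeMul E x z + wedgeMul E y z :=
  Subtype.ext (by simp [wedgeMul, add_mul])

lemma wedgeMul_smul_left (c : E) (x z : ⋀[E]^2 V) :
    wedgeMul E (c • x) z = c • wedgeMul E x z :=
  Subtype.ext (by simp [wedgeMul, smul_mul_assoc])

lemma wedgeMul_sub_left (x y z : ⋀[E]^2 V) :
    wedgeMul E (x - y) z = wedgeMul E x z - wedgeMul E y z :=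
  Subtype.ext (by simp [wedgeMul, sub_mul])

lemma iota_swap' (a b : V) : ι E a * ι E b = -(ι E b * ι E a) :=
  eq_neg_of_add_eq_zero_left (ι_add_mul_swap a b)

lemma iota_swap (a b : V) (x : ExteriorAlgebra E V) :
    ι E a * (ι E b * x) = -(ι E b * (ι E a * x)) := by
  rw [← mul_assoc, ← mul_assoc, iota_swap', neg_mul]

lemma iota_rep (a : V) (x : ExteriorAlgebra E V) : ι E a * (ι E a * x) = 0 := by
  rw [← mul_assoc, ι_sq_zero, zero_mul]

lemma z13 (a b c : V) : (ι E a * ι E b) * (ι E a * ι E c) = 0 := by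
  rw [mul_assoc, iota_swap b a, mul_neg, iota_rep, neg_zero]

lemma z14 (a b c : V) : (ι E a * ι E b) * (ι E c * ι E a) = 0 := by
  rw [mul_assoc, iota_swap' c a]
  simp only [mul_neg, iota_swap b a, neg_neg, iota_rep, neg_zero, mul_zero]

lemma z23 (a b c : V) : (ι E a * ι E b) * (ι E b * ι E c) = 0 := by
  rw [mul_assoc, iota_rep, mul_zero]

lemma z24 (a b c : V) : (ι E a * ι E b) * (ι E c * ι E b) = 0 := by
  rw [mul_assoc, iota_swap' c b]
  simp only [mul_neg, iota_rep, mul_zero, neg_zero]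

lemma s1 (a b c d : V) :
    (ι E a * ι E b) * (ι E c * ι E d) = ι E a * (ι E b * (ι E c * ι E d)) := by
  rw [mul_assoc]

lemma s2 (a b c d : V) :
    (ι E a * ι E c) * (ι E b * ι E d) = -(ι E a * (ι E b * (ι E c * ι E d))) := by
  rw [mul_assoc, iota_swap c b, mul_neg]

lemma s3 (a b c d : V) :
    (ι E a * ι E d) * (ι E b * ι E c) = ι E a * (ι E b * (ι E c * ι E d)) := by
  rw [mul_assoc, iota_swap d b, iota_swap' d c]
  simp only [mul_neg, neg_neg]

lemma s4 (a b c d : V) :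
    (ι E b * ι E c) * (ι E a * ι E d) = ι E a * (ι E b * (ι E c * ι E d)) := by
  rw [mul_assoc, iota_swap c a, mul_neg, iota_swap b a, neg_neg]

lemma s5 (a b c d : V) :
    (ι E b * ι E d) * (ι E a * ι E c) = -(ι E a * (ι E b * (ι E c * ι E d))) := by
  rw [mul_assoc, iota_swap d a, iota_swap' d c]
  simp only [mul_neg, neg_neg, iota_swap b a]

lemma s6 (a b c d : V) :
    (ι E c * ι E d) * (ι E a * ι E b) = ι E a * (ι E b * (ι E c * ι E d)) := by
  rw [mul_assoc, iota_swap d a, iota_swap' d b]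
  simp only [mul_neg, neg_neg, iota_swap c a, iota_swap' c b, iota_swap c b]

lemma exists_rep (v : Module.Basis (Fin 4) E V) (x : ⋀[E]^2 V) :
    ∃ c : Fin 6 → E,
      x = c 0 • wedgeι E 2 ![v 0, v 1] + c 1 • wedgeι E 2 ![v 0, v 2]
        + c 2 • wedgeι E 2 ![v 0, v 3] + c 3 • wedgeι E 2 ![v 1, v 2]
        + c 4 • wedgeι E 2 ![v 1, v 3] + c 5 • wedgeι E 2 ![v 2, v 3] := by
  have hx : (x : ExteriorAlgebra E V)
      ∈ LinearMap.range (ι E (M := V)) * LinearMap.range (ι E (M := V)) := by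
    have h2 : (x : ExteriorAlgebra E V) ∈ LinearMap.range (ι E (M := V)) ^ 2 := x.2
    rwa [pow_two] at h2
  have main : ∃ c : Fin 6 → E,
      (x : ExteriorAlgebra E V)
        = c 0 • (ι E (v 0) * ι E (v 1)) + c 1 • (ι E (v 0) * ι E (v 2))
        + c 2 • (ι E (v 0) * ι E (v 3)) + c 3 • (ι E (v 1) * ι E (v 2))
        + c 4 • (ι E (v 1) * ι E (v 3)) + c 5 • (ι E (v 2) * ι E (v 3)) := by
    refine Submodule.mul_induction_on hx ?_ ?_
    · rintro _ ⟨a, rfl⟩ _ ⟨b, rfl⟩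
      have ha : ι E a = ∑ i : Fin 4, v.repr a i • ι E (v i) := by
        conv_lhs => rw [← Module.Basis.sum_repr v a, map_sum]
        simp
      have hb : ι E b = ∑ i : Fin 4, v.repr b i • ι E (v i) := by
        conv_lhs => rw [← Module.Basis.sum_repr v b, map_sum]
        simp
      refine ⟨![v.repr a 0 * v.repr b 1 - v.repr a 1 * v.repr b 0,
        v.repr a 0 * v.repr b 2 - v.repr a 2 * v.repr b 0,
        v.repr a 0 * v.repr b 3 - v.repr a 3 * v.repr b 0,
        v.repr a 1 * v.repr b 2 - v.repr a 2 * v.repr b 1,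
        v.repr a 1 * v.repr b 3 - v.repr a 3 * v.repr b 1,
        v.repr a 2 * v.repr b 3 - v.repr a 3 * v.repr b 2], ?_⟩
      rw [ha, hb, Finset.sum_mul_sum]
      simp only [smul_mul_smul_comm]
      rw [Fin.sum_univ_four]
      simp only [Fin.sum_univ_four, ι_sq_zero, smul_zero,
        iota_swap' (v 1) (v 0), iota_swap' (v 2) (v 0), iota_swap' (v 2) (v 1),
        iota_swap' (v 3) (v 0), iota_swap' (v 3) (v 1), iota_swap' (v 3) (v 2),
        Matrix.cons_val_zero, Matrix.cons_val_one, Matrix.head_cons,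
        Matrix.cons_val_two, Matrix.cons_val_three, Matrix.tail_cons]
      simp only [show (4 : Fin 6) = Fin.succ 3 from rfl, show (5 : Fin 6) = Fin.succ 4 from rfl,
        show (3 : Fin 5) = Fin.succ 2 from rfl, show (4 : Fin 5) = Fin.succ 3 from rfl,
        Matrix.cons_val_succ, Matrix.cons_val_zero, Matrix.cons_val_one, Matrix.head_cons,
        Matrix.cons_val_two, Matrix.cons_val_three, Matrix.tail_cons]
      module
    · rintro y z ⟨c, hc⟩ ⟨c', hc'⟩
      refine ⟨c + c', ?_⟩
      simp only [Pi.add_apply, hc, hc']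
      module
  obtain ⟨c, hc⟩ := main
  refine ⟨c, Subtype.ext ?_⟩
  simpa only [Submodule.coe_add, SetLike.val_smul, wedgeι_two_coe] using hc

end LProof

open LProof

set_option maxHeartbeats 1600000 in
set_option synthInstance.maxHeartbeats 400000 in
/-- If `v₁, v₂, v₃, v₄` is an orthogonal basis of the 4-dimensional hermitian
space `(V,H)` with `H(vᵢ,vᵢ) = aᵢ ∈ F^×`, and `d` is normalized by `d(v₁∧v₂∧v₃∧v₄) = -1`, then
the semilinear map `L` is given on the wedge basis by the explicit formulas below; in particular
`L ∘ L = a₁a₂a₃a₄ · id`. -/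
theorem L_on_orthogonal_basis
    {F E : Type*} [Field F] [CharZero F] [Field E] [Algebra F E]
    (hquad : Module.finrank F E = 2)
    (ρ : E →+* E) (hρ_invol : ∀ a, ρ (ρ a) = a) (hρ_ne : ρ ≠ RingHom.id E)
    (hρ_fixF : ∀ c : F, ρ (algebraMap F E c) = algebraMap F E c)
    (hρ_fixed_field : ∀ a : E, ρ a = a → ∃ c : F, algebraMap F E c = a)
    {V : Type*} [AddCommGroup V] [Module E V] [FiniteDimensional E V]
    (hV4 : Module.finrank E V = 4)
    (H : V → V → E)
    (H_add_left : ∀ x y z, H (x + y) z = H x z + H y z)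
    (H_add_right : ∀ x y z, H x (y + z) = H x y + H x z)
    (H_smul : ∀ (a b : E) (x y : V), H (a • x) (b • y) = ρ a * H x y * b)
    (H_conj : ∀ x y, H x y = ρ (H y x))
    (H_nondeg : ∀ x, (∀ y, H x y = 0) → x = 0)
    (d : (⋀[E]^4 V) ≃ₗ[E] E)
    (h₂ : (⋀[E]^2 V) → (⋀[E]^2 V) → E) (hh₂ : IsDetForm ρ H 2 h₂)
    (L : (⋀[E]^2 V) → (⋀[E]^2 V))
    (L_add : ∀ x y, L (x + y) = L x + L y)
    (L_smul : ∀ (a : E) (x : ⋀[E]^2 V), L (a • x) = ρ a • L x)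
    (L_def : ∀ x y : ⋀[E]^2 V, d (wedgeMul E (L x) y) = h₂ x y)
    (v : Module.Basis (Fin 4) E V) (a : Fin 4 → F) (ha : ∀ i, a i ≠ 0)
    (hGram : ∀ i j, H (v i) (v j) = if i = j then algebraMap F E (a i) else 0)
    (hd : d (wedgeι E 4 ⇑v) = -1) :
    L (wedgeι E 2 ![v 0, v 1]) = -(algebraMap F E (a 0 * a 1)) • wedgeι E 2 ![v 2, v 3] ∧
    L (wedgeι E 2 ![v 0, v 2]) = (algebraMap F E (a 0 * a 2)) • wedgeι E 2 ![v 1, v 3] ∧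
    L (wedgeι E 2 ![v 0, v 3]) = -(algebraMap F E (a 0 * a 3)) • wedgeι E 2 ![v 1, v 2] ∧
    L (wedgeι E 2 ![v 1, v 2]) = -(algebraMap F E (a 1 * a 2)) • wedgeι E 2 ![v 0, v 3] ∧
    L (wedgeι E 2 ![v 1, v 3]) = (algebraMap F E (a 1 * a 3)) • wedgeι E 2 ![v 0, v 2] ∧
    L (wedgeι E 2 ![v 2, v 3]) = -(algebraMap F E (a 2 * a 3)) • wedgeι E 2 ![v 0, v 1] ∧
    (∀ x : ⋀[E]^2 V, L (L x) = algebraMap F E (a 0 * a 1 * a 2 * a 3) • x) := by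
  classical
  have hP : (wedgeι E 4 ⇑v : ExteriorAlgebra E V)
      = ExteriorAlgebra.ι E (v 0) * (ExteriorAlgebra.ι E (v 1)
        * (ExteriorAlgebra.ι E (v 2) * ExteriorAlgebra.ι E (v 3))) := wedgeι_four_coe ⇑v
  have hD1 : d (wedgeMul E (wedgeι E 2 ![v 0, v 1]) (wedgeι E 2 ![v 2, v 3])) = -1 := by
    rw [show wedgeMul E (wedgeι E 2 ![v 0, v 1]) (wedgeι E 2 ![v 2, v 3]) = wedgeι E 4 ⇑v from
      Subtype.ext (by rw [wedgeMul_coe, wedgeι_two_coe, wedgeι_two_coe, hP]; exact s1 _ _ _ _), hd]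
  have hD2 : d (wedgeMul E (wedgeι E 2 ![v 0, v 2]) (wedgeι E 2 ![v 1, v 3])) = 1 := by
    rw [show wedgeMul E (wedgeι E 2 ![v 0, v 2]) (wedgeι E 2 ![v 1, v 3]) = -wedgeι E 4 ⇑v from
      Subtype.ext (by
        rw [wedgeMul_coe, wedgeι_two_coe, wedgeι_two_coe]
        show _ = -(wedgeι E 4 ⇑v : ExteriorAlgebra E V)
        rw [hP]; exact s2 _ _ _ _), map_neg d, hd, neg_neg]
  have hD3 : d (wedgeMul E (wedgeι E 2 ![v 0, v 3]) (wedgeι E 2 ![v 1, v 2])) = -1 := by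
    rw [show wedgeMul E (wedgeι E 2 ![v 0, v 3]) (wedgeι E 2 ![v 1, v 2]) = wedgeι E 4 ⇑v from
      Subtype.ext (by rw [wedgeMul_coe, wedgeι_two_coe, wedgeι_two_coe, hP]; exact s3 _ _ _ _), hd]
  have hD4 : d (wedgeMul E (wedgeι E 2 ![v 1, v 2]) (wedgeι E 2 ![v 0, v 3])) = -1 := by
    rw [show wedgeMul E (wedgeι E 2 ![v 1, v 2]) (wedgeι E 2 ![v 0, v 3]) = wedgeι E 4 ⇑v from
      Subtype.ext (by rw [wedgeMul_coe, wedgeι_two_coe, wedgeι_two_coe, hP]; exact s4 _ _ _ _), hd]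
  have hD5 : d (wedgeMul E (wedgeι E 2 ![v 1, v 3]) (wedgeι E 2 ![v 0, v 2])) = 1 := by
    rw [show wedgeMul E (wedgeι E 2 ![v 1, v 3]) (wedgeι E 2 ![v 0, v 2]) = -wedgeι E 4 ⇑v from
      Subtype.ext (by
        rw [wedgeMul_coe, wedgeι_two_coe, wedgeι_two_coe]
        show _ = -(wedgeι E 4 ⇑v : ExteriorAlgebra E V)
        rw [hP]; exact s5 _ _ _ _), map_neg d, hd, neg_neg]
  have hD6 : d (wedgeMul E (wedgeι E 2 ![v 2, v 3]) (wedgeι E 2 ![v 0, v 1])) = -1 := by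
    rw [show wedgeMul E (wedgeι E 2 ![v 2, v 3]) (wedgeι E 2 ![v 0, v 1]) = wedgeι E 4 ⇑v from
      Subtype.ext (by rw [wedgeMul_coe, wedgeι_two_coe, wedgeι_two_coe, hP]; exact s6 _ _ _ _), hd]
  have hBz : ∀ i j k l : Fin 4, i = k ∨ i = l ∨ j = k ∨ j = l →
      d (wedgeMul E (wedgeι E 2 ![v i, v j]) (wedgeι E 2 ![v k, v l])) = 0 := by
    intro i j k l h
    have hz : wedgeMul E (wedgeι E 2 ![v i, v j]) (wedgeι E 2 ![v k, v l]) = 0 := by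
      apply Subtype.ext
      rw [wedgeMul_coe, wedgeι_two_coe, wedgeι_two_coe]
      show _ = (0 : ExteriorAlgebra E V)
      rcases h with rfl | rfl | rfl | rfl
      · exact z13 _ _ _
      · exact z14 _ _ _
      · exact z23 _ _ _
      · exact z24 _ _ _
    rw [hz, map_zero]
  have hBexp : ∀ (c : Fin 6 → E) (y : ⋀[E]^2 V),
      d (wedgeMul E (c 0 • wedgeι E 2 ![v 0, v 1] + c 1 • wedgeι E 2 ![v 0, v 2]
        + c 2 • wedgeι E 2 ![v 0, v 3] + c 3 • wedgeι E 2 ![v 1, v 2]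
        + c 4 • wedgeι E 2 ![v 1, v 3] + c 5 • wedgeι E 2 ![v 2, v 3]) y)
      = c 0 * d (wedgeMul E (wedgeι E 2 ![v 0, v 1]) y)
        + c 1 * d (wedgeMul E (wedgeι E 2 ![v 0, v 2]) y)
        + c 2 * d (wedgeMul E (wedgeι E 2 ![v 0, v 3]) y)
        + c 3 * d (wedgeMul E (wedgeι E 2 ![v 1, v 2]) y)
        + c 4 * d (wedgeMul E (wedgeι E 2 ![v 1, v 3]) y)
        + c 5 * d (wedgeMul E (wedgeι E 2 ![v 2, v 3]) y) := by
    intro c y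
    simp only [wedgeMul_add_left, wedgeMul_smul_left, map_add, map_smul, smul_eq_mul]
  have key : ∀ w : ⋀[E]^2 V,
      d (wedgeMul E w (wedgeι E 2 ![v 0, v 1])) = 0 →
      d (wedgeMul E w (wedgeι E 2 ![v 0, v 2])) = 0 →
      d (wedgeMul E w (wedgeι E 2 ![v 0, v 3])) = 0 →
      d (wedgeMul E w (wedgeι E 2 ![v 1, v 2])) = 0 →
      d (wedgeMul E w (wedgeι E 2 ![v 1, v 3])) = 0 →
      d (wedgeMul E w (wedgeι E 2 ![v 2, v 3])) = 0 → w = 0 := by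
    intro w h1 h2 h3 h4 h5 h6
    obtain ⟨c, rfl⟩ := exists_rep v w
    rw [hBexp, hD6, hBz 0 1 0 1 (by decide), hBz 0 2 0 1 (by decide), hBz 0 3 0 1 (by decide),
      hBz 1 2 0 1 (by decide), hBz 1 3 0 1 (by decide)] at h1
    rw [hBexp, hD5, hBz 0 1 0 2 (by decide), hBz 0 2 0 2 (by decide), hBz 0 3 0 2 (by decide),
      hBz 1 2 0 2 (by decide), hBz 2 3 0 2 (by decide)] at h2
    rw [hBexp, hD4, hBz 0 1 0 3 (by decide), hBz 0 2 0 3 (by decide), hBz 0 3 0 3 (by decide),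
      hBz 1 3 0 3 (by decide), hBz 2 3 0 3 (by decide)] at h3
    rw [hBexp, hD3, hBz 0 1 1 2 (by decide), hBz 0 2 1 2 (by decide), hBz 1 2 1 2 (by decide),
      hBz 1 3 1 2 (by decide), hBz 2 3 1 2 (by decide)] at h4
    rw [hBexp, hD2, hBz 0 1 1 3 (by decide), hBz 0 3 1 3 (by decide), hBz 1 2 1 3 (by decide),
      hBz 1 3 1 3 (by decide), hBz 2 3 1 3 (by decide)] at h5
    rw [hBexp, hD1, hBz 0 2 2 3 (by decide), hBz 0 3 2 3 (by decide), hBz 1 2 2 3 (by decide),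
      hBz 1 3 2 3 (by decide), hBz 2 3 2 3 (by decide)] at h6
    have hc0 : c 0 = 0 := by linear_combination -h6
    have hc1 : c 1 = 0 := by linear_combination h5
    have hc2 : c 2 = 0 := by linear_combination -h4
    have hc3 : c 3 = 0 := by linear_combination -h3
    have hc4 : c 4 = 0 := by linear_combination h2
    have hc5 : c 5 = 0 := by linear_combination -h1
    rw [hc0, hc1, hc2, hc3, hc4, hc5]
    simp
  have hh : ∀ i j k l : Fin 4,
      h₂ (wedgeι E 2 ![v i, v j]) (wedgeι E 2 ![v k, v l])
        = (if i = k then algebraMap F E (a i) else 0)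
            * (if j = l then algebraMap F E (a j) else 0)
          - (if i = l then algebraMap F E (a i) else 0)
            * (if j = k then algebraMap F E (a j) else 0) := by
    intro i j k l
    rw [hh₂.2.2.2.2, Matrix.det_fin_two]
    simp [hGram]
  have huniq : ∀ x u : ⋀[E]^2 V,
      d (wedgeMul E u (wedgeι E 2 ![v 0, v 1])) = h₂ x (wedgeι E 2 ![v 0, v 1]) →
      d (wedgeMul E u (wedgeι E 2 ![v 0, v 2])) = h₂ x (wedgeι E 2 ![v 0, v 2]) →
      d (wedgeMul E u (wedgeι E 2 ![v 0, v 3])) = h₂ x (wedgeι E 2 ![v 0, v 3]) →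
      d (wedgeMul E u (wedgeι E 2 ![v 1, v 2])) = h₂ x (wedgeι E 2 ![v 1, v 2]) →
      d (wedgeMul E u (wedgeι E 2 ![v 1, v 3])) = h₂ x (wedgeι E 2 ![v 1, v 3]) →
      d (wedgeMul E u (wedgeι E 2 ![v 2, v 3])) = h₂ x (wedgeι E 2 ![v 2, v 3]) →
      L x = u := by
    intro x u h1 h2 h3 h4 h5 h6
    have hs : ∀ y : ⋀[E]^2 V, d (wedgeMul E u y) = h₂ x y →
        d (wedgeMul E (L x - u) y) = 0 := by
      intro y hy; rw [wedgeMul_sub_left, map_sub, L_def, hy, sub_self]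
    have h := key (L x - u) (hs _ h1) (hs _ h2) (hs _ h3) (hs _ h4) (hs _ h5) (hs _ h6)
    rwa [sub_eq_zero] at h
  have hL1 : L (wedgeι E 2 ![v 0, v 1])
      = -(algebraMap F E (a 0 * a 1)) • wedgeι E 2 ![v 2, v 3] := by
    refine huniq _ _ ?_ ?_ ?_ ?_ ?_ ?_ <;>
      rw [wedgeMul_smul_left, map_smul, smul_eq_mul, hh]
    · rw [hD6]; simp [map_mul]
    · rw [hBz 2 3 0 2 (by decide)]; simp
    · rw [hBz 2 3 0 3 (by decide)]; simp
    · rw [hBz 2 3 1 2 (by decide)]; simp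
    · rw [hBz 2 3 1 3 (by decide)]; simp
    · rw [hBz 2 3 2 3 (by decide)]; simp
  have hL2 : L (wedgeι E 2 ![v 0, v 2])
      = (algebraMap F E (a 0 * a 2)) • wedgeι E 2 ![v 1, v 3] := by
    refine huniq _ _ ?_ ?_ ?_ ?_ ?_ ?_ <;>
      rw [wedgeMul_smul_left, map_smul, smul_eq_mul, hh]
    · rw [hBz 1 3 0 1 (by decide)]; simp
    · rw [hD5]; simp [map_mul]
    · rw [hBz 1 3 0 3 (by decide)]; simp
    · rw [hBz 1 3 1 2 (by decide)]; simp
    · rw [hBz 1 3 1 3 (by decide)]; simp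
    · rw [hBz 1 3 2 3 (by decide)]; simp
  have hL3 : L (wedgeι E 2 ![v 0, v 3])
      = -(algebraMap F E (a 0 * a 3)) • wedgeι E 2 ![v 1, v 2] := by
    refine huniq _ _ ?_ ?_ ?_ ?_ ?_ ?_ <;>
      rw [wedgeMul_smul_left, map_smul, smul_eq_mul, hh]
    · rw [hBz 1 2 0 1 (by decide)]; simp
    · rw [hBz 1 2 0 2 (by decide)]; simp
    · rw [hD4]; simp [map_mul]
    · rw [hBz 1 2 1 2 (by decide)]; simp
    · rw [hBz 1 2 1 3 (by decide)]; simp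
    · rw [hBz 1 2 2 3 (by decide)]; simp
  have hL4 : L (wedgeι E 2 ![v 1, v 2])
      = -(algebraMap F E (a 1 * a 2)) • wedgeι E 2 ![v 0, v 3] := by
    refine huniq _ _ ?_ ?_ ?_ ?_ ?_ ?_ <;>
      rw [wedgeMul_smul_left, map_smul, smul_eq_mul, hh]
    · rw [hBz 0 3 0 1 (by decide)]; simp
    · rw [hBz 0 3 0 2 (by decide)]; simp
    · rw [hBz 0 3 0 3 (by decide)]; simp
    · rw [hD3]; simp [map_mul]
    · rw [hBz 0 3 1 3 (by decide)]; simp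
    · rw [hBz 0 3 2 3 (by decide)]; simp
  have hL5 : L (wedgeι E 2 ![v 1, v 3])
      = (algebraMap F E (a 1 * a 3)) • wedgeι E 2 ![v 0, v 2] := by
    refine huniq _ _ ?_ ?_ ?_ ?_ ?_ ?_ <;>
      rw [wedgeMul_smul_left, map_smul, smul_eq_mul, hh]
    · rw [hBz 0 2 0 1 (by decide)]; simp
    · rw [hBz 0 2 0 2 (by decide)]; simp
    · rw [hBz 0 2 0 3 (by decide)]; simp
    · rw [hBz 0 2 1 2 (by decide)]; simp
    · rw [hD2]; simp [map_mul]
    · rw [hBz 0 2 2 3 (by decide)]; simp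
  have hL6 : L (wedgeι E 2 ![v 2, v 3])
      = -(algebraMap F E (a 2 * a 3)) • wedgeι E 2 ![v 0, v 1] := by
    refine huniq _ _ ?_ ?_ ?_ ?_ ?_ ?_ <;>
      rw [wedgeMul_smul_left, map_smul, smul_eq_mul, hh]
    · rw [hBz 0 1 0 1 (by decide)]; simp
    · rw [hBz 0 1 0 2 (by decide)]; simp
    · rw [hBz 0 1 0 3 (by decide)]; simp
    · rw [hBz 0 1 1 2 (by decide)]; simp
    · rw [hBz 0 1 1 3 (by decide)]; simp
    · rw [hD1]; simp [map_mul]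
  refine ⟨hL1, hL2, hL3, hL4, hL5, hL6, ?_⟩
  intro x
  obtain ⟨c, rfl⟩ := exists_rep v x
  simp only [L_add, L_smul, hL1, hL2, hL3, hL4, hL5, hL6, smul_neg, neg_smul, neg_neg,
    map_neg, hρ_fixF, hρ_invol, smul_smul, map_mul, smul_add]
  module
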